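/- Parallel concatenation with threshold adversary, honest-side bound: let n channels have ambiguities A₁,…,A_n, let t < n be the number of possibly malicious channels, and set A* = min over nonempty G ⊆ {1,…,n} with |G| > t of ⌊(∑_{i∈G} Aᵢ)/(|G| − t)⌋. Then for any multiset of received candidate value-lists where channel i outputs a set Vᵢ of values with |Vᵢ| ≤ Aᵢ for honest i, and the true value v lies in Vᵢ for every honest channel i (at least n − t channels honest), the set of values occurring in at least |G| − t of the sets {Vᵢ : i ∈ G} (for the minimizing G) contains v and has size at most A*. (Counting argument underlying Theorem 8's achievability.) -/

import Mathlib

/-- Honest-side bound for threshold parallel concatenation: if at most `t` of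
`n` channels are malicious (the honest set `H` misses at most `t` indices),
every honest channel's output set `V i` contains the true value `v` and has
at most `A i` elements, and `G` is a set of more than `t` channels each
outputting at most `A i` values, then the set of values occurring in at least
`|G| − t` of the sets `Vᵢ, i ∈ G` contains `v` and has at most
`⌊(∑_{i∈G} A i)/(|G|−t)⌋` elements (which equals `A*` for the minimizing `G`). -/
theorem stmt_11 {α : Type*} [DecidableEq α] (n t : ℕ) (ht : t < n)
    (A : Fin n → ℕ) (V : Fin n → Finset α) (v : α)
    (H : Finset (Fin n)) (hH : (Finset.univ \ H).card ≤ t)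
    (hhonest : ∀ i ∈ H, v ∈ V i ∧ (V i).card ≤ A i)
    (G : Finset (Fin n)) (hG : t < G.card)
    (hGcard : ∀ i ∈ G, (V i).card ≤ A i)
    (hmin : ∀ G' : Finset (Fin n), t < G'.card →
      (∑ i ∈ G, A i) / (G.card - t) ≤ (∑ i ∈ G', A i) / (G'.card - t)) :
    v ∈ (G.biUnion V).filter
        (fun w => G.card - t ≤ (G.filter (fun i => w ∈ V i)).card) ∧
    ((G.biUnion V).filter
        (fun w => G.card - t ≤ (G.filter (fun i => w ∈ V i)).card)).card ≤
      (∑ i ∈ G, A i) / (G.card - t) := by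
  have hsub : G ∩ H ⊆ G.filter (fun i => v ∈ V i) := by
    intro i hi
    simp only [Finset.mem_inter] at hi
    exact Finset.mem_filter.mpr ⟨hi.1, (hhonest i hi.2).1⟩
  have hGH : G.card - t ≤ (G ∩ H).card := by
    have h1 : G \ H ⊆ Finset.univ \ H := by
      intro i hi
      simp only [Finset.mem_sdiff] at hi ⊢
      exact ⟨Finset.mem_univ i, hi.2⟩
    have h2 : (G \ H).card ≤ t := le_trans (Finset.card_le_card h1) hH
    have h3 : G.card = (G ∩ H).card + (G \ H).card :=
      (Finset.card_inter_add_card_sdiff G H).symm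
    omega
  have hcount : G.card - t ≤ (G.filter (fun i => v ∈ V i)).card :=
    le_trans hGH (Finset.card_le_card hsub)
  have hpos : 0 < G.card - t := Nat.sub_pos_of_lt hG
  have hvmem : v ∈ G.biUnion V := by
    obtain ⟨i, hi⟩ := Finset.card_pos.mp (lt_of_lt_of_le hpos hcount)
    rw [Finset.mem_filter] at hi
    exact Finset.mem_biUnion.mpr ⟨i, hi.1, hi.2⟩
  refine ⟨Finset.mem_filter.mpr ⟨hvmem, hcount⟩, ?_⟩
  set S := (G.biUnion V).filter
      (fun w => G.card - t ≤ (G.filter (fun i => w ∈ V i)).card) with hS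
  rw [Nat.le_div_iff_mul_le hpos]
  calc S.card * (G.card - t)
      ≤ ∑ w ∈ S, (G.filter (fun i => w ∈ V i)).card := by
        rw [Finset.card_eq_sum_ones S, Finset.sum_mul, one_mul]
        exact Finset.sum_le_sum (fun w hw => (Finset.mem_filter.mp hw).2)
    _ = ∑ i ∈ G, (S.filter (fun w => w ∈ V i)).card := by
        simp only [Finset.card_filter]
        rw [Finset.sum_comm]
    _ ≤ ∑ i ∈ G, (V i).card := by
        refine Finset.sum_le_sum (fun i hi => Finset.card_le_card ?_)
        intro w hw
        exact (Finset.mem_filter.mp hw).2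
    _ ≤ ∑ i ∈ G, A i := Finset.sum_le_sum hGcard
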